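/- Let m ≥ 1 and let C be a normalized symmetric conference matrix of order 4m+2. Let ε ∈ {1, −1} and let c be a complex number of absolute value 1 with Re(c) = (−1 + ε·√(4m+1))/(4m). Define the (4m+1)×(4m+1) matrix W, indexed by 2 ≤ i,j ≤ 4m+2 (i.e., the first row and column of C are discarded), by W_ii = 1, and for i ≠ j, W_ij = c if C_ij = 1 and W_ij = conj(c) if C_ij = −1. Then W is a complex Hadamard matrix of order 4m+1. -/

import Mathlib

open Matrix

/-- `H` is a complex Hadamard matrix: unimodular entries and `H Hᴴ = n • I`. -/
def IsCHadamard {n : Type*} [Fintype n] [DecidableEq n] (H : Matrix n n ℂ) : Prop :=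
  (∀ i j, ‖H i j‖ = 1) ∧
    H * H.conjTranspose = (Fintype.card n : ℂ) • 1

/-- `C` is a conference matrix of order `n`: zero diagonal, `±1` off the
diagonal, and `C Cᵀ = (n-1) I`. -/
def IsConference {n : ℕ} (C : Matrix (Fin n) (Fin n) ℝ) : Prop :=
  (∀ i, C i i = 0) ∧ (∀ i j, i ≠ j → C i j = 1 ∨ C i j = -1) ∧
    C * C.transpose = ((n : ℝ) - 1) • 1

/-- A conference matrix is normalized if all off-diagonal entries of its first
row and first column equal `1`. -/
def IsNormalizedConf {n : ℕ} [NeZero n] (C : Matrix (Fin n) (Fin n) ℝ) : Prop :=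
  ∀ j, j ≠ 0 → C 0 j = 1 ∧ C j 0 = 1

theorem stmt7 (m : ℕ) (hm : 1 ≤ m)
    (C : Matrix (Fin (4 * m + 2)) (Fin (4 * m + 2)) ℝ)
    (hconf : IsConference C) (hnorm : IsNormalizedConf C) (hsym : C.transpose = C)
    (ε : ℝ) (hε : ε = 1 ∨ ε = -1)
    (c : ℂ) (hcabs : ‖c‖ = 1)
    (hcre : c.re = (-1 + ε * Real.sqrt (4 * m + 1)) / (4 * m)) :
    IsCHadamard (Matrix.of fun i j : Fin (4 * m + 1) =>
      if i = j then (1 : ℂ)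
      else if C i.succ j.succ = 1 then c else (starRingEnd ℂ) c) := by
  obtain ⟨hdiag, hoff, hCC⟩ := hconf
  set x := c.re with hxdef
  set y := c.im with hydef
  -- scalar facts
  have hm0 : (4 * (m : ℝ)) ≠ 0 := by
    have : (0:ℝ) < m := by exact_mod_cast hm
    positivity
  have hxy : x ^ 2 + y ^ 2 = 1 := by
    have h := Complex.sq_norm c
    rw [hcabs, Complex.normSq_apply] at h
    nlinarith [h]
  have h1 : 4 * (m : ℝ) * x + 1 = ε * Real.sqrt (4 * m + 1) := by
    rw [hcre]; field_simp; ring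
  have h2 : (4 * (m : ℝ) * x + 1) ^ 2 = 4 * m + 1 := by
    rw [h1, mul_pow, Real.sq_sqrt (by positivity)]
    rcases hε with h | h <;> rw [h] <;> ring
  have hquad : 4 * (m : ℝ) * x ^ 2 + 2 * x - 1 = 0 := by
    have h4 : 4 * (m:ℝ) * (4 * m * x ^ 2 + 2 * x - 1) = 0 := by linear_combination h2
    exact (mul_eq_zero.mp h4).resolve_left hm0
  have hxy' : (x:ℂ) ^ 2 + (y:ℂ) ^ 2 = 1 := by exact_mod_cast hxy
  have hq' : 4 * (m:ℂ) * (x:ℂ) ^ 2 + 2 * (x:ℂ) - 1 = 0 := by exact_mod_cast hquad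
  -- row facts
  have hrow : ∀ a b, ∑ k, C a k * C b k = if a = b then ((4*m+1 : ℝ)) else 0 := by
    intro a b
    have h := congrFun (congrFun hCC a) b
    simp only [Matrix.mul_apply, Matrix.transpose_apply, Matrix.smul_apply,
      Matrix.one_apply, smul_eq_mul] at h
    rw [h]
    push_cast
    split_ifs <;> ring
  have L1 : ∀ i : Fin (4*m+1), ∑ k : Fin (4*m+1), C i.succ k.succ = 0 := by
    intro i
    have h := hrow 0 i.succ
    rw [Fin.sum_univ_succ] at h
    rw [if_neg (Ne.symm (Fin.succ_ne_zero i))] at h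
    have hc : ∀ k ∈ Finset.univ, C 0 (k:Fin (4*m+1)).succ * C i.succ k.succ = C i.succ k.succ :=
      fun k _ => by rw [(hnorm _ (Fin.succ_ne_zero k)).1, one_mul]
    rw [Finset.sum_congr rfl hc, hdiag, zero_mul, zero_add] at h
    exact h
  have L2 : ∀ i j : Fin (4*m+1), ∑ k : Fin (4*m+1), C i.succ k.succ * C j.succ k.succ
      = (if i = j then ((4*m+1:ℝ)) else 0) - 1 := by
    intro i j
    have h := hrow i.succ j.succ
    rw [Fin.sum_univ_succ] at h
    rw [(hnorm _ (Fin.succ_ne_zero i)).2, (hnorm _ (Fin.succ_ne_zero j)).2, one_mul] at h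
    simp only [Fin.succ_inj] at h
    linarith [h]
  have L1' : ∀ i : Fin (4*m+1), ∑ k : Fin (4*m+1), ((C i.succ k.succ : ℝ) : ℂ) = 0 := by
    intro i; exact_mod_cast L1 i
  have L2' : ∀ i j : Fin (4*m+1), ∑ k : Fin (4*m+1),
      ((C i.succ k.succ : ℝ) : ℂ) * ((C j.succ k.succ : ℝ) : ℂ)
      = (if i = j then ((4*m+1:ℝ):ℂ) else 0) - 1 := by
    intro i j
    rcases eq_or_ne i j with rfl | hij
    · have h := L2 i i
      rw [if_pos rfl] at h
      rw [if_pos rfl]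
      exact_mod_cast h
    · have h := L2 i j
      rw [if_neg hij] at h
      rw [if_neg hij]
      exact_mod_cast h
  have hS0 : ∀ i : Fin (4*m+1), C i.succ i.succ = 0 := fun i => hdiag _
  set W : Matrix (Fin (4*m+1)) (Fin (4*m+1)) ℂ := Matrix.of fun i j : Fin (4 * m + 1) =>
      if i = j then (1 : ℂ)
      else if C i.succ j.succ = 1 then c else (starRingEnd ℂ) c with hWdef
  have hW : ∀ i k : Fin (4*m+1), W i k =
      (if i = k then ((1:ℂ) - x) else 0) + (x:ℂ) + Complex.I * (y:ℂ) * ((C i.succ k.succ : ℝ) : ℂ) := by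
    intro i k
    by_cases h : i = k
    · subst h
      simp only [hWdef, Matrix.of_apply, if_pos rfl, hS0 i]
      push_cast
      ring
    · have hs := hoff i.succ k.succ (by simpa [Fin.succ_inj] using h)
      rcases hs with h1 | h1
      · simp only [hWdef, Matrix.of_apply, if_neg h, if_pos h1, h1]
        conv_lhs => rw [← Complex.re_add_im c]
        push_cast
        ring
      · have h1' : C i.succ k.succ ≠ 1 := by rw [h1]; norm_num
        simp only [hWdef, Matrix.of_apply, if_neg h, if_neg h1']
        conv_lhs => rw [← Complex.re_add_im c]
        simp only [_root_.map_add, _root_.map_mul, Complex.conj_ofReal, Complex.conj_I, h1]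
        push_cast
        ring
  have hWc : ∀ j k : Fin (4*m+1), star (W j k) =
      (if j = k then ((1:ℂ) - x) else 0) + (x:ℂ) - Complex.I * (y:ℂ) * ((C j.succ k.succ : ℝ) : ℂ) := by
    intro j k
    rw [hW]
    simp only [Complex.star_def, _root_.map_add, _root_.map_mul, apply_ite (starRingEnd ℂ),
      _root_.map_sub, _root_.map_one, _root_.map_zero, Complex.conj_ofReal, Complex.conj_I]
    ring
  constructor
  · intro i j
    rw [hWdef]
    simp only [Matrix.of_apply]
    split_ifs with h1 h2
    · simp
    · exact hcabs
    · rw [Complex.norm_conj]; exact hcabs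
  · ext i j
    rw [Matrix.mul_apply]
    simp only [Matrix.conjTranspose_apply]
    have key : ∀ k : Fin (4*m+1), W i k * star (W j k) =
        (if i = k then ((1:ℂ)-x) * (if j = k then ((1:ℂ)-x) else 0) else 0)
      + (if i = k then ((1:ℂ)-x) * ((x:ℂ) - Complex.I*(y:ℂ)*((C j.succ k.succ:ℝ):ℂ)) else 0)
      + (if j = k then ((1:ℂ)-x) * ((x:ℂ) + Complex.I*(y:ℂ)*((C i.succ k.succ:ℝ):ℂ)) else 0)
      + ((x:ℂ)^2 + Complex.I*(y:ℂ)*(x:ℂ)*((C i.succ k.succ:ℝ):ℂ)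
          - Complex.I*(y:ℂ)*(x:ℂ)*((C j.succ k.succ:ℝ):ℂ)
          + (y:ℂ)^2*(((C i.succ k.succ:ℝ):ℂ)*((C j.succ k.succ:ℝ):ℂ))) := by
      intro k
      rw [hW, hWc]
      split_ifs <;>
        linear_combination (-(y:ℂ)^2 * ((C i.succ k.succ:ℝ):ℂ) * ((C j.succ k.succ:ℝ):ℂ)) *
          Complex.I_sq
    rw [Finset.sum_congr rfl (fun k _ => key k)]
    rw [Finset.sum_add_distrib, Finset.sum_add_distrib, Finset.sum_add_distrib,
      Finset.sum_ite_eq, Finset.sum_ite_eq, Finset.sum_ite_eq]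
    have sum4 : ∑ k : Fin (4*m+1), ((x:ℂ)^2 + Complex.I*(y:ℂ)*(x:ℂ)*((C i.succ k.succ:ℝ):ℂ)
          - Complex.I*(y:ℂ)*(x:ℂ)*((C j.succ k.succ:ℝ):ℂ)
          + (y:ℂ)^2*(((C i.succ k.succ:ℝ):ℂ)*((C j.succ k.succ:ℝ):ℂ)))
        = (4*(m:ℂ)+1)*(x:ℂ)^2 + (y:ℂ)^2 * ((if i = j then ((4*m+1:ℝ):ℂ) else 0) - 1) := by
      simp only [Finset.sum_add_distrib, Finset.sum_sub_distrib, ← Finset.mul_sum,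
        L1' i, L1' j, L2' i j, Finset.sum_const, Finset.card_univ, Fintype.card_fin,
        nsmul_eq_mul, mul_zero]
      push_cast
      ring
    rw [sum4]
    simp only [Finset.mem_univ, if_pos, if_true, Matrix.smul_apply, Matrix.one_apply,
      smul_eq_mul, Fintype.card_fin]
    rcases eq_or_ne i j with hij | hij
    · subst hij
      simp only [if_pos rfl, hS0 i]
      push_cast
      linear_combination (4*(m:ℂ)) * hxy'
    · have hsji : C j.succ i.succ = C i.succ j.succ :=
        (congrFun (congrFun hsym j.succ) i.succ).symm
      simp only [if_neg hij, if_neg (Ne.symm hij), hsji]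
      push_cast
      linear_combination hq' - hxy'
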